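/- Let K be a field of characteristic 2. Then the ℤ-graded identities of U_1 admit no finite basis: there is no finite subset S ⊆ L such that T_ℤ(U_1) = ⟨S⟩_{T_ℤ}. -/

import Mathlib

open FreeLieAlgebra LaurentPolynomial

/-- The free Lie algebra `L` over `K` on the generators `x_i^a`, `(a, i) : ℤ × ℕ`;
the generator `x_i^a := FreeLieAlgebra.of K (a, i)` has ℤ-degree `a`. -/
abbrev FL (K : Type*) [Field K] := FreeLieAlgebra K (ℤ × ℕ)

variable (K : Type*) [Field K]

/-- Iterated Lie brackets of generators whose ℤ-degrees sum to `a`. -/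
inductive IsHomBracket : FL K → ℤ → Prop
  | gen (a : ℤ) (i : ℕ) : IsHomBracket (FreeLieAlgebra.of K (a, i)) a
  | bracket {u v : FL K} {a b : ℤ} :
      IsHomBracket u a → IsHomBracket v b → IsHomBracket ⁅u, v⁆ (a + b)

/-- The homogeneous component `L_a` of the free Lie algebra. -/
noncomputable def homComp (a : ℤ) : Submodule K (FL K) :=
  Submodule.span K {w : FL K | IsHomBracket K w a}

/-- A graded endomorphism of the free Lie algebra. -/
def IsGradedEndo (φ : FL K →ₗ⁅K⁆ FL K) : Prop :=
  ∀ (a : ℤ) (i : ℕ), φ (FreeLieAlgebra.of K (a, i)) ∈ homComp K a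

/-- A `T_ℤ`-ideal: a Lie ideal stable under all graded endomorphisms. -/
def IsTIdeal (I : LieIdeal K (FL K)) : Prop :=
  ∀ φ : FL K →ₗ⁅K⁆ FL K, IsGradedEndo K φ → ∀ x ∈ I, φ x ∈ I

/-- `⟨S⟩_{T_ℤ}`, the smallest `T_ℤ`-ideal containing `S` (as a set of elements). -/
def TSpan (S : Set (FL K)) : Set (FL K) :=
  {x : FL K | ∀ I : LieIdeal K (FL K), IsTIdeal K I → S ⊆ (I : Set (FL K)) → x ∈ I}

/-- `U_1`, the Lie algebra of `K`-linear derivations of `K[t, t⁻¹]`. -/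
abbrev U1 (K : Type*) [Field K] := Derivation K (LaurentPolynomial K) (LaurentPolynomial K)

/-- Evaluation of a derivation of `K[t,t⁻¹]` at `t`, as a linear map. -/
noncomputable def evalT : U1 K →ₗ[K] LaurentPolynomial K where
  toFun D := D (T 1)
  map_add' D E := by simp
  map_smul' c D := by simp

/-- The homogeneous component `(U_1)_a = {D | D t ∈ K • t^{a+1}}` of the canonical
ℤ-grading of `U_1`. -/
noncomputable def U1comp (a : ℤ) : Submodule K (U1 K) :=
  (Submodule.span K ({T (a + 1)} : Set (LaurentPolynomial K))).comap (evalT K)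

/-- `T_ℤ(U_1)`, the set of ℤ-graded identities of `U_1`. -/
def TU1 : Set (FL K) :=
  {f : FL K | ∀ v : ℤ × ℕ → U1 K, (∀ (a : ℤ) (i : ℕ), v (a, i) ∈ U1comp K a) →
    FreeLieAlgebra.lift K v f = 0}

attribute [local instance] LieRing.ofAssociativeRing

/-! ### Auxiliary material -/

namespace TU1Aux

variable {K}

/-- Power rule for derivations of Laurent polynomials. -/
lemma U1_map_T (D : U1 K) (n : ℤ) :
    D (T n) = n • ((T (n - 1) : LaurentPolynomial K) * D (T 1)) := by
  have hu : IsUnit (T 1 : LaurentPolynomial K) := isUnit_T 1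
  induction n using Int.induction_on with
  | zero => simp
  | succ k ih =>
      have h : (T ((k : ℤ) + 1) : LaurentPolynomial K) = T (k : ℤ) * T 1 := by
        rw [← T_add]
      have h2 : (T (1:ℤ) : LaurentPolynomial K) * T ((k : ℤ) - 1) = T (k : ℤ) := by
        rw [← T_add]; ring_nf
      have h3 : ((k : ℤ) + 1) - 1 = (k : ℤ) := by ring
      calc D (T ((k : ℤ) + 1)) = T (k:ℤ) * D (T 1) + T 1 * D (T (k:ℤ)) := by
            rw [h, Derivation.leibniz]; simp only [smul_eq_mul]; try ring
        _ = T (k:ℤ) * D (T 1) + (k:ℤ) • ((T 1 : LaurentPolynomial K) * (T ((k:ℤ)-1) * D (T 1))) := by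
            rw [ih, mul_smul_comm]
        _ = T (k:ℤ) * D (T 1) + (k:ℤ) • ((T (k:ℤ) : LaurentPolynomial K) * D (T 1)) := by
            rw [← mul_assoc, h2]
        _ = ((k:ℤ) + 1) • ((T (((k:ℤ)+1) - 1) : LaurentPolynomial K) * D (T 1)) := by
            rw [h3, add_smul, one_smul, add_comm]
  | pred k ih =>
      have hleib : D (T (-(k:ℤ))) =
          (T (-(k:ℤ) - 1) : LaurentPolynomial K) * D (T 1) + T 1 * D (T (-(k:ℤ) - 1)) := by
        have h : (T (-(k:ℤ)) : LaurentPolynomial K) = T (-(k:ℤ) - 1) * T 1 := by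
          rw [← T_add]; ring_nf
        rw [h, Derivation.leibniz]; simp only [smul_eq_mul]; try ring
      have hTT : (T 1 : LaurentPolynomial K) * T (-(k:ℤ) - 1 - 1) = T (-(k:ℤ) - 1) := by
        rw [← T_add]; ring_nf
      apply hu.mul_left_cancel
      calc (T 1 : LaurentPolynomial K) * D (T (-(k:ℤ) - 1))
          = D (T (-(k:ℤ))) - (T (-(k:ℤ) - 1) : LaurentPolynomial K) * D (T 1) := by
            rw [hleib]; ring
        _ = (-(k:ℤ)) • ((T (-(k:ℤ) - 1) : LaurentPolynomial K) * D (T 1))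
              - (T (-(k:ℤ) - 1) : LaurentPolynomial K) * D (T 1) := by rw [ih]
        _ = (-(k:ℤ) - 1) • ((T (-(k:ℤ) - 1) : LaurentPolynomial K) * D (T 1)) := by
            rw [sub_smul, one_smul]
        _ = T 1 * ((-(k:ℤ) - 1) • ((T (-(k:ℤ) - 1 - 1) : LaurentPolynomial K) * D (T 1))) := by
            rw [mul_smul_comm, ← mul_assoc, hTT]

/-- A derivation of `K[t,t⁻¹]` vanishing at `t` is zero. -/
lemma U1_eq_zero_of_evalT (D : U1 K) (h : D (T 1) = 0) : D = 0 := by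
  ext1 p
  induction p using LaurentPolynomial.induction_on' with
  | add p q hp hq => simp [hp, hq]
  | C_mul_T n a =>
      rw [Derivation.leibniz, U1_map_T D n, h]
      rw [C_eq_algebraMap, Derivation.map_algebraMap]
      simp

lemma mem_U1comp_iff {a : ℤ} {D : U1 K} :
    D ∈ U1comp K a ↔ ∃ c : K, D (T 1) = c • T (a + 1) := by
  constructor
  · intro h
    obtain ⟨c, hc⟩ := Submodule.mem_span_singleton.mp h
    exact ⟨c, hc.symm⟩
  · intro ⟨c, hc⟩
    exact Submodule.mem_span_singleton.mpr ⟨c, hc.symm⟩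

/-- In characteristic two, homogeneous derivations of degrees `a, b` with `a + b` even
commute. -/
lemma bracket_eq_zero_of_even {a b : ℤ} (hab : ((b : K) - (a : K)) = 0)
    {D E : U1 K} (hD : D ∈ U1comp K a) (hE : E ∈ U1comp K b) : ⁅D, E⁆ = (0 : U1 K) := by
  obtain ⟨c, hc⟩ := mem_U1comp_iff.mp hD
  obtain ⟨d, hd⟩ := mem_U1comp_iff.mp hE
  apply U1_eq_zero_of_evalT
  rw [Derivation.commutator_apply, hc, hd, Derivation.map_smul, Derivation.map_smul,
    U1_map_T D (b+1), U1_map_T E (a+1), hc, hd]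
  have h1 : (b:ℤ) + 1 - 1 = b := by ring
  have h2 : (a:ℤ) + 1 - 1 = a := by ring
  rw [h1, h2]
  have hT1 : (T b : LaurentPolynomial K) * (c • T (a+1)) = c • T (a + b + 1) := by
    rw [mul_smul_comm, ← T_add]; ring_nf
  have hT2 : (T a : LaurentPolynomial K) * (d • T (b+1)) = d • T (a + b + 1) := by
    rw [mul_smul_comm, ← T_add]; ring_nf
  rw [hT1, hT2]
  rw [← Int.cast_smul_eq_zsmul K (b+1), ← Int.cast_smul_eq_zsmul K (a+1)]
  rw [smul_smul, smul_smul, smul_smul, smul_smul, ← sub_smul]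
  apply smul_eq_zero_of_left
  push_cast
  linear_combination (c * d) * hab

/-! ### The matrix witness algebra -/

/-- Shorthand for 3×3 matrices. -/
abbrev M3 (K : Type*) [Field K] := Matrix (Fin 3) (Fin 3) K

variable (K)

/-- Elementary matrices. -/
def stdE (i j : Fin 3) : M3 K := Matrix.single i j (1 : K)

/-- The generator of the degree-`a` component of the witness grading. -/
def UE (N : ℤ) (a : ℤ) : M3 K :=
  if a = 2*N then stdE K 0 1
  else if a = 4*N then stdE K 1 2
  else if a = 6*N then stdE K 0 2
  else 0

/-- The Heisenberg-type grading on `M3` supported in degrees `2N, 4N, 6N`. -/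
def Ucomp (N : ℤ) : ℤ → Submodule K (M3 K) := fun a =>
  Submodule.span K {UE K N a}

lemma lie_E12_E23 : ⁅stdE K 0 1, stdE K 1 2⁆ = stdE K 0 2 := by
  rw [Ring.lie_def]
  unfold stdE
  rw [Matrix.single_mul_single_same, Matrix.single_mul_single_of_ne 1 1 2 0 (by decide) 1,
    one_mul, sub_zero]

lemma lie_E23_E12 : ⁅stdE K 1 2, stdE K 0 1⁆ = -stdE K 0 2 := by
  rw [← lie_skew, lie_E12_E23]

lemma lie_E12_E13 : ⁅stdE K 0 1, stdE K 0 2⁆ = 0 := by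
  rw [Ring.lie_def]
  unfold stdE
  rw [Matrix.single_mul_single_of_ne 1 0 1 0 (by decide) 1,
    Matrix.single_mul_single_of_ne 1 0 2 0 (by decide) 1, sub_zero]

lemma lie_E13_E12 : ⁅stdE K 0 2, stdE K 0 1⁆ = 0 := by
  rw [← lie_skew, lie_E12_E13, neg_zero]

lemma lie_E23_E13 : ⁅stdE K 1 2, stdE K 0 2⁆ = 0 := by
  rw [Ring.lie_def]
  unfold stdE
  rw [Matrix.single_mul_single_of_ne 1 1 2 0 (by decide) 1,
    Matrix.single_mul_single_of_ne 1 0 2 1 (by decide) 1, sub_zero]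

lemma lie_E13_E23 : ⁅stdE K 0 2, stdE K 1 2⁆ = 0 := by
  rw [← lie_skew, lie_E23_E13, neg_zero]

lemma UE_bracket {N : ℤ} (hN : 1 ≤ N) (a b : ℤ) :
    ⁅UE K N a, UE K N b⁆ ∈ Submodule.span K {UE K N (a + b)} := by
  unfold UE
  split_ifs <;>
    first
      | omega
      | (rw [zero_lie]; exact Submodule.zero_mem _)
      | (rw [lie_zero]; exact Submodule.zero_mem _)
      | (rw [lie_self]; exact Submodule.zero_mem _)
      | (rw [lie_E12_E23]; exact Submodule.mem_span_singleton_self _)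
      | (rw [lie_E23_E12]; exact Submodule.neg_mem _ (Submodule.mem_span_singleton_self _))
      | (rw [lie_E12_E13]; exact Submodule.zero_mem _)
      | (rw [lie_E13_E12]; exact Submodule.zero_mem _)
      | (rw [lie_E23_E13]; exact Submodule.zero_mem _)
      | (rw [lie_E13_E23]; exact Submodule.zero_mem _)

lemma Ucomp_bracket {N : ℤ} (hN : 1 ≤ N) :
    ∀ (a b : ℤ) (x y : M3 K), x ∈ Ucomp K N a → y ∈ Ucomp K N b →
      ⁅x, y⁆ ∈ Ucomp K N (a + b) := by
  intro a b x y hx hy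
  obtain ⟨c, rfl⟩ := Submodule.mem_span_singleton.mp hx
  obtain ⟨d, rfl⟩ := Submodule.mem_span_singleton.mp hy
  rw [smul_lie, lie_smul]
  exact Submodule.smul_mem _ _ (Submodule.smul_mem _ _ (UE_bracket K hN a b))

/-! ### Letters occurring in an element of the free Lie algebra -/

/-- The canonical Lie homomorphism into the free associative algebra. -/
noncomputable def jFA : FL K →ₗ⁅K⁆ FreeAlgebra K (ℤ × ℕ) :=
  FreeLieAlgebra.lift K (FreeAlgebra.ι K)

/-- The free algebra as a monoid algebra. -/
noncomputable def eMA : FreeAlgebra K (ℤ × ℕ) ≃ₐ[K] MonoidAlgebra K (FreeMonoid (ℤ × ℕ)) :=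
  FreeAlgebra.equivMonoidAlgebraFreeMonoid

/-- The finite set of ℤ-degrees of generators occurring in `s`. -/
noncomputable def degSet (s : FL K) : Finset ℤ :=
  ((eMA K) (jFA K s)).coeff.support.biUnion
    (fun w => ((FreeMonoid.toList w).map Prod.fst).toFinset)

lemma eMA_apply_iota (x : ℤ × ℕ) :
    (eMA K) (FreeAlgebra.ι K x) = MonoidAlgebra.single (FreeMonoid.of x) 1 := by
  simp [eMA, FreeAlgebra.equivMonoidAlgebraFreeMonoid, MonoidAlgebra.of_apply]

lemma eMA_symm_single_of (x : ℤ × ℕ) :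
    (eMA K).symm (MonoidAlgebra.single (FreeMonoid.of x) 1) = FreeAlgebra.ι K x := by
  rw [← eMA_apply_iota, AlgEquiv.symm_apply_apply]

lemma eMA_symm_single_prod (w : FreeMonoid (ℤ × ℕ)) :
    (eMA K).symm (MonoidAlgebra.single w (1:K)) =
      ((FreeMonoid.toList w).map (FreeAlgebra.ι K)).prod := by
  induction w using FreeMonoid.recOn with
  | one =>
      have h1 : MonoidAlgebra.single (1 : FreeMonoid (ℤ × ℕ)) (1:K)
          = (1 : MonoidAlgebra K (FreeMonoid (ℤ × ℕ))) := rfl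
      rw [h1, map_one]
      simp [FreeMonoid.toList_one]
  | of_mul x xs h =>
      have h1 : MonoidAlgebra.single (FreeMonoid.of x * xs) (1:K)
          = MonoidAlgebra.single (FreeMonoid.of x) (1:K) * MonoidAlgebra.single xs (1:K) := by
        rw [MonoidAlgebra.single_mul_single, one_mul]
      rw [h1, map_mul, h, eMA_symm_single_of, FreeMonoid.toList_of_mul]
      simp [List.map_cons]

/-- Evaluation of an algebra map on an element all of whose letters are killed. -/
lemma alg_apply_eq (ψ : FreeAlgebra K (ℤ × ℕ) →ₐ[K] M3 K) (y : FreeAlgebra K (ℤ × ℕ))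
    (h : ∀ w ∈ ((eMA K) y).coeff.support, ∀ x ∈ FreeMonoid.toList w, ψ (FreeAlgebra.ι K x) = 0) :
    ψ y = (((eMA K) y).coeff 1) • 1 := by
  classical
  have hy : ψ y = ψ ((eMA K).symm ((eMA K) y)) := by rw [AlgEquiv.symm_apply_apply]
  have hsum : ψ ((eMA K).symm ((eMA K) y)) =
      ((eMA K) y).coeff.sum fun w c =>
        c • (((FreeMonoid.toList w).map (fun x => ψ (FreeAlgebra.ι K x))).prod) := by
    conv_lhs => rw [← MonoidAlgebra.ofCoeff_coeff ((eMA K) y), ← Finsupp.sum_single ((eMA K) y).coeff]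
    rw [MonoidAlgebra.ofCoeff_finsuppSum, map_finsuppSum, map_finsuppSum]
    refine Finsupp.sum_congr ?_
    intro w _
    have h1 : MonoidAlgebra.ofCoeff (Finsupp.single w (((eMA K) y).coeff w))
        = (((eMA K) y).coeff w) • (MonoidAlgebra.single w (1:K)) := by
      rw [MonoidAlgebra.smul_single', mul_one, MonoidAlgebra.ofCoeff_single]
    erw [h1]
    rw [map_smul, map_smul, eMA_symm_single_prod, map_list_prod, List.map_map]
    rfl
  have hite : (((eMA K) y).coeff.sum fun w c =>
        c • (((FreeMonoid.toList w).map (fun x => ψ (FreeAlgebra.ι K x))).prod))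
      = ((eMA K) y).coeff.sum fun w c => if w = 1 then c • (1 : M3 K) else 0 := by
    refine Finsupp.sum_congr ?_
    intro w hw
    by_cases hw1 : w = 1
    · subst hw1
      simp [FreeMonoid.toList_one]
    · rw [if_neg hw1]
      cases hl : FreeMonoid.toList w with
      | nil =>
          exact absurd (FreeMonoid.toList.injective
            (by rw [hl, FreeMonoid.toList_one])) hw1
      | cons x xs =>
          have hx : x ∈ FreeMonoid.toList w := by rw [hl]; exact List.mem_cons_self
          simp [List.prod_cons, h w hw x hx]
  rw [hy, hsum, hite, Finsupp.sum_ite_eq' ((eMA K) y).coeff 1 (fun _ c => c • (1 : M3 K))]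
  by_cases h1 : (1 : FreeMonoid (ℤ × ℕ)) ∈ ((eMA K) y).coeff.support
  · rw [if_pos h1]
  · rw [if_neg h1, Finsupp.notMem_support_iff.mp h1, zero_smul]

lemma lift_eq_alg (u : ℤ × ℕ → M3 K) (s : FL K) :
    FreeLieAlgebra.lift K u s = (FreeAlgebra.lift K u) (jFA K s) := by
  have h : (AlgHom.toLieHom (FreeAlgebra.lift K u)).comp (jFA K) = FreeLieAlgebra.lift K u := by
    apply FreeLieAlgebra.hom_ext
    intro p
    simp [jFA, FreeLieAlgebra.lift_of_apply]
  rw [← h]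
  rfl

lemma coeff_one_zero (s : FL K) : ((eMA K) (jFA K s)).coeff 1 = 0 := by
  have h0 : FreeLieAlgebra.lift K (fun _ : ℤ × ℕ => (0 : M3 K)) s = 0 := by
    have hz : FreeLieAlgebra.lift K (fun _ : ℤ × ℕ => (0 : M3 K)) = (0 : FL K →ₗ⁅K⁆ M3 K) := by
      apply FreeLieAlgebra.hom_ext
      intro p
      simp [FreeLieAlgebra.lift_of_apply]
    rw [hz]
    rfl
  rw [lift_eq_alg] at h0
  have h1 := alg_apply_eq K (FreeAlgebra.lift K (fun _ : ℤ × ℕ => (0 : M3 K))) (jFA K s)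
    (by intro w _ x _; simp)
  have hc : (((eMA K) (jFA K s)).coeff 1) • (1 : M3 K) = 0 := h1.symm.trans h0
  have h00 := Matrix.ext_iff.mpr hc 0 0
  simpa using h00

lemma lift_vanish (s : FL K) (u : ℤ × ℕ → M3 K)
    (hu : ∀ x : ℤ × ℕ, x.1 ∈ degSet K s → u x = 0) :
    FreeLieAlgebra.lift K u s = 0 := by
  rw [lift_eq_alg]
  have h := alg_apply_eq K (FreeAlgebra.lift K u) (jFA K s) ?_
  · rw [h, coeff_one_zero, zero_smul]
  · intro w hw x hx
    rw [FreeAlgebra.lift_ι_apply]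
    apply hu
    exact Finset.mem_biUnion.mpr ⟨w, hw, List.mem_toFinset.mpr (List.mem_map_of_mem hx)⟩

/-! ### The T-ideal of graded identities of the witness algebra -/

/-- Graded identities of the matrix witness algebra. -/
def Iideal (U : ℤ → Submodule K (M3 K)) : LieIdeal K (FL K) where
  carrier := {f | ∀ u : ℤ × ℕ → M3 K,
    (∀ (a : ℤ) (i : ℕ), u (a, i) ∈ U a) → FreeLieAlgebra.lift K u f = 0}
  add_mem' := fun hx hy u hu => by
    rw [map_add, hx u hu, hy u hu, add_zero]
  zero_mem' := fun u hu => map_zero _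
  smul_mem' := fun c x hx u hu => by rw [map_smul, hx u hu, smul_zero]
  lie_mem := fun {x m} hm u hu => by rw [LieHom.map_lie, hm u hu, lie_zero]

lemma mem_Iideal {U : ℤ → Submodule K (M3 K)} {f : FL K} :
    f ∈ Iideal K U ↔ ∀ u : ℤ × ℕ → M3 K,
      (∀ (a : ℤ) (i : ℕ), u (a, i) ∈ U a) → FreeLieAlgebra.lift K u f = 0 :=
  Iff.rfl

lemma lift_mem_of_homComp {U : ℤ → Submodule K (M3 K)}
    (hU : ∀ (a b : ℤ) (x y : M3 K), x ∈ U a → y ∈ U b → ⁅x, y⁆ ∈ U (a + b))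
    {u : ℤ × ℕ → M3 K} (hu : ∀ (a : ℤ) (i : ℕ), u (a, i) ∈ U a)
    {a : ℤ} {w : FL K} (hw : w ∈ homComp K a) :
    FreeLieAlgebra.lift K u w ∈ U a := by
  induction hw using Submodule.span_induction with
  | mem x hx =>
      induction hx with
      | gen a i => rw [FreeLieAlgebra.lift_of_apply]; exact hu a i
      | bracket h1 h2 ih1 ih2 => rw [LieHom.map_lie]; exact hU _ _ _ _ ih1 ih2
  | zero => rw [map_zero]; exact Submodule.zero_mem _
  | add x y _ _ ihx ihy => rw [map_add]; exact Submodule.add_mem _ ihx ihy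
  | smul c x _ ih => rw [map_smul]; exact Submodule.smul_mem _ _ ih

lemma isTIdeal_Iideal {U : ℤ → Submodule K (M3 K)}
    (hU : ∀ (a b : ℤ) (x y : M3 K), x ∈ U a → y ∈ U b → ⁅x, y⁆ ∈ U (a + b)) :
    IsTIdeal K (Iideal K U) := by
  intro φ hφ x hx
  rw [mem_Iideal] at hx ⊢
  intro u hu
  have hu' : ∀ (a : ℤ) (i : ℕ),
      (fun p => FreeLieAlgebra.lift K u (φ (FreeLieAlgebra.of K p))) (a, i) ∈ U a :=
    fun a i => lift_mem_of_homComp K hU hu (hφ a i)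
  have hcomp : (FreeLieAlgebra.lift K u).comp φ
      = FreeLieAlgebra.lift K (fun p => FreeLieAlgebra.lift K u (φ (FreeLieAlgebra.of K p))) := by
    apply FreeLieAlgebra.hom_ext
    intro p
    simp [FreeLieAlgebra.lift_of_apply]
  have h0 := hx (fun p => FreeLieAlgebra.lift K u (φ (FreeLieAlgebra.of K p))) hu'
  calc FreeLieAlgebra.lift K u (φ x) = ((FreeLieAlgebra.lift K u).comp φ) x := rfl
    _ = 0 := by rw [hcomp]; exact h0

end TU1Aux

/-- Corollary 4.7 (for `U_1`): over a field of characteristic two, the ℤ-graded identities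
of `U_1` admit no finite basis. -/
theorem TU1_no_finite_basis [CharP K 2] :
    ¬ ∃ S : Set (FL K), S.Finite ∧ TU1 K = TSpan K S := by
  rintro ⟨S, hSfin, hEq⟩
  classical
  -- a finite set of "bad" degrees occurring in elements of `S`
  set bad : Finset ℤ := hSfin.toFinset.biUnion (fun s => TU1Aux.degSet K s) with hbaddef
  set N : ℤ := ((bad.sup Int.natAbs : ℕ) : ℤ) + 1 with hNdef
  have hN1 : 1 ≤ N := by omega
  have havoid : ∀ d ∈ bad, d ≠ 2*N ∧ d ≠ 4*N ∧ d ≠ 6*N := by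
    intro d hd
    have h1 : d.natAbs ≤ bad.sup Int.natAbs := Finset.le_sup hd
    omega
  set U : ℤ → Submodule K (TU1Aux.M3 K) := TU1Aux.Ucomp K N with hUdef
  have hUb : ∀ (a b : ℤ) (x y : TU1Aux.M3 K), x ∈ U a → y ∈ U b → ⁅x, y⁆ ∈ U (a + b) :=
    TU1Aux.Ucomp_bracket K hN1
  set I : LieIdeal K (FL K) := TU1Aux.Iideal K U with hIdef
  have hTI : IsTIdeal K I := TU1Aux.isTIdeal_Iideal K hUb
  -- any admissible substitution kills all generators with degrees in `bad`
  have hUbot : ∀ a : ℤ, a ∈ bad → ∀ x : TU1Aux.M3 K, x ∈ U a → x = 0 := by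
    intro a ha x hx
    obtain ⟨h2, h4, h6⟩ := havoid a ha
    rw [hUdef] at hx
    unfold TU1Aux.Ucomp TU1Aux.UE at hx
    rw [if_neg h2, if_neg h4, if_neg h6, Submodule.span_zero_singleton, Submodule.mem_bot] at hx
    exact hx
  have hSI : S ⊆ (I : Set (FL K)) := by
    intro s hs
    have hmem : s ∈ I := by
      rw [hIdef, TU1Aux.mem_Iideal]
      intro u hu
      apply TU1Aux.lift_vanish
      intro x hx
      have hxbad : x.1 ∈ bad := by
        rw [hbaddef]
        exact Finset.mem_biUnion.mpr ⟨s, hSfin.mem_toFinset.mpr hs, hx⟩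
      have := hu x.1 x.2
      rw [Prod.mk.eta] at this
      exact hUbot x.1 hxbad _ this
    exact hmem
  -- the graded identity `⁅x^{2N}, x^{4N}⁆` of `U_1` (characteristic two!)
  set g : FL K := ⁅FreeLieAlgebra.of K (2*N, 0), FreeLieAlgebra.of K (4*N, 0)⁆ with hgdef
  have hgTU1 : g ∈ TU1 K := by
    intro v hv
    rw [hgdef, LieHom.map_lie, FreeLieAlgebra.lift_of_apply, FreeLieAlgebra.lift_of_apply]
    apply TU1Aux.bracket_eq_zero_of_even _ (hv (2*N) 0) (hv (4*N) 0)
    have h2 : (2 : K) = 0 := by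
      have := CharP.cast_eq_zero K 2
      exact_mod_cast this
    push_cast
    linear_combination (N : K) * h2
  -- hence `g` lies in every T-ideal containing `S`, in particular in `I`
  have hgI : g ∈ I := by
    rw [hEq] at hgTU1
    exact hgTU1 I hTI hSI
  -- but the obvious admissible substitution sends `g` to a nonzero matrix
  set u₀ : ℤ × ℕ → TU1Aux.M3 K := fun p =>
    if p.1 = 2*N then TU1Aux.stdE K 0 1 else if p.1 = 4*N then TU1Aux.stdE K 1 2 else 0
    with hu₀def
  have hu₀ : ∀ (a : ℤ) (i : ℕ), u₀ (a, i) ∈ U a := by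
    intro a i
    rw [hu₀def, hUdef]
    unfold TU1Aux.Ucomp TU1Aux.UE
    simp only
    split_ifs <;>
      first
        | exact Submodule.mem_span_singleton_self _
        | exact Submodule.zero_mem _
  have hzero := (TU1Aux.mem_Iideal K).mp hgI u₀ hu₀
  rw [hgdef, LieHom.map_lie, FreeLieAlgebra.lift_of_apply, FreeLieAlgebra.lift_of_apply] at hzero
  have h42 : (4*N : ℤ) ≠ 2*N := by omega
  have e1 : u₀ (2*N, 0) = TU1Aux.stdE K 0 1 := by simp [hu₀def]
  have e2 : u₀ (4*N, 0) = TU1Aux.stdE K 1 2 := by simp [hu₀def, h42]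
  rw [e1, e2, TU1Aux.lie_E12_E23] at hzero
  have h02 := Matrix.ext_iff.mpr hzero 0 2
  simp [TU1Aux.stdE] at h02
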